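/- Let (X,d) be a metric space and let (μₙ)_{n∈ℕ} be a sequence of Borel probability measures on X. Let ℒ := ⋂_{n∈ℕ} closure{μ_k : k ≥ n} ⊆ ℳ₁(X) be the set of all subsequential weak limits of (μₙ)_{n∈ℕ}. Then the following are equivalent: (i) (μₙ)_{n∈ℕ} is asymptotically tight; (ii) (μₙ)_{n∈ℕ} is sequentially tight; (iii) (μₙ)_{n∈ℕ} is precompact and ℒ is tight (i.e. for every ε > 0 there is a compact set K ⊆ X with μ(K) ≥ 1 − ε for every μ ∈ ℒ). -/

import Mathlib

open MeasureTheory Filter Topology Metric Set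
open scoped ENNReal NNReal

namespace SeqTightAux

lemma liminf_le_liminf_comp {u : ℕ → ℝ≥0∞} {φ : ℕ → ℕ} (hφ : StrictMono φ) :
    Filter.liminf u Filter.atTop ≤ Filter.liminf (fun n => u (φ n)) Filter.atTop := by
  have h := Filter.liminf_le_liminf_of_le (f := Filter.atTop)
    (g := Filter.map φ Filter.atTop) hφ.tendsto_atTop (u := u)
  rw [← Filter.liminf_comp] at h
  exact h

lemma ofReal_le_liminf_of_forall {u : ℕ → ℝ≥0∞} {r : ℝ}
    (h : ∀ θ : ℝ, 0 < θ → ∀ᶠ n in Filter.atTop, ENNReal.ofReal (r - θ) ≤ u n) :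
    ENNReal.ofReal r ≤ Filter.liminf u Filter.atTop := by
  rcases le_or_gt r 0 with hr | hr
  · simp [ENNReal.ofReal_eq_zero.2 hr]
  · refine le_of_forall_lt fun c hc => ?_
    have hc' : c ≠ ⊤ := (lt_of_lt_of_le hc le_top).ne
    have hct : c.toReal < r := (ENNReal.lt_ofReal_iff_toReal_lt hc').1 hc
    set θ := (r - c.toReal) / 2 with hθ
    have hθpos : 0 < θ := by simp only [hθ]; linarith
    have hcr : c < ENNReal.ofReal (r - θ) := by
      rw [ENNReal.lt_ofReal_iff_toReal_lt hc']
      simp only [hθ]; linarith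
    exact lt_of_lt_of_le hcr <|
      Filter.le_liminf_of_le (by isBoundedDefault) ((h θ hθpos).mono fun n hn => hn)

lemma eventually_ofReal_le_of_le_liminf {u : ℕ → ℝ≥0∞} {r : ℝ}
    (h : ENNReal.ofReal r ≤ Filter.liminf u Filter.atTop) {θ : ℝ} (hθ : 0 < θ) :
    ∀ᶠ n in Filter.atTop, ENNReal.ofReal (r - θ) ≤ u n := by
  rcases le_or_gt (r - θ) 0 with hr | hr
  · exact Filter.Eventually.of_forall fun n => by simp [ENNReal.ofReal_eq_zero.2 hr]
  · have hlt : ENNReal.ofReal (r - θ) < Filter.liminf u Filter.atTop :=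
      lt_of_lt_of_le ((ENNReal.ofReal_lt_ofReal_iff_of_nonneg hr.le).2 (by linarith)) h
    exact (Filter.eventually_lt_of_lt_liminf hlt).mono fun n hn => hn.le

/-- mass of intersection for probability measures. -/
lemma ofReal_le_inter {Y : Type*} [MeasurableSpace Y] (ρ : Measure Y) [IsProbabilityMeasure ρ]
    {A B : Set Y} (hB : MeasurableSet B) {a b : ℝ}
    (ha : ENNReal.ofReal a ≤ ρ A) (hbb : ENNReal.ofReal b ≤ ρ B) :
    ENNReal.ofReal (a + b - 1) ≤ ρ (A ∩ B) := by
  rcases le_or_gt (a + b - 1) 0 with h0 | h0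
  · simp [ENNReal.ofReal_eq_zero.2 h0]
  have key : ρ A + ρ B ≤ 1 + ρ (A ∩ B) := by
    have h1 := MeasureTheory.measure_union_add_inter (μ := ρ) A hB
    have h2 : ρ (A ∪ B) ≤ 1 := prob_le_one
    calc ρ A + ρ B = ρ (A ∪ B) + ρ (A ∩ B) := h1.symm
    _ ≤ 1 + ρ (A ∩ B) := add_le_add_left h2 _
  have step : 1 + ENNReal.ofReal (a + b - 1) ≤ 1 + ρ (A ∩ B) := by
    calc 1 + ENNReal.ofReal (a + b - 1)
        = ENNReal.ofReal 1 + ENNReal.ofReal (a + b - 1) := by simp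
      _ = ENNReal.ofReal (1 + (a + b - 1)) := (ENNReal.ofReal_add (by norm_num) h0.le).symm
      _ = ENNReal.ofReal (a + b) := by ring_nf
      _ ≤ ENNReal.ofReal a + ENNReal.ofReal b := ENNReal.ofReal_add_le
      _ ≤ ρ A + ρ B := add_le_add ha hbb
      _ ≤ 1 + ρ (A ∩ B) := key
  exact (ENNReal.add_le_add_iff_left ENNReal.one_ne_top).1 step




lemma isComplete_of_isClosed_subset {X : Type*} [MetricSpace X] {C K : Set X}
    (hC : IsComplete C) (hK : IsClosed K) (hsub : K ⊆ C) : IsComplete K := by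
  intro f hf hfK
  obtain ⟨x, hxC, hx⟩ := hC f hf (hfK.trans (Filter.principal_mono.2 hsub))
  refine ⟨x, ?_, hx⟩
  haveI : f.NeBot := hf.1
  rw [← hK.closure_eq, mem_closure_iff_nhdsWithin_neBot]
  exact Filter.neBot_of_le (le_inf hx hfK)

lemma totallyBounded_of_near_compact {X : Type*} [MetricSpace X] {s : Set X}
    (h : ∀ ρ : ℝ, 0 < ρ → ∃ M : Set X, IsCompact M ∧ s ⊆ Metric.thickening ρ M) :
    TotallyBounded s := by
  rw [Metric.totallyBounded_iff]
  intro ρ hρ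
  obtain ⟨M, hM, hsM⟩ := h (ρ/2) (by linarith)
  obtain ⟨t, htfin, htM⟩ := Metric.totallyBounded_iff.1 hM.totallyBounded (ρ/2) (by linarith)
  refine ⟨t, htfin, fun x hx => ?_⟩
  obtain ⟨z, hzM, hzx⟩ := Metric.mem_thickening_iff.1 (hsM hx)
  obtain ⟨y, hy, hzy⟩ := Set.mem_iUnion₂.1 (htM hzM)
  exact Set.mem_iUnion₂.2 ⟨y, hy, by
    simp only [Metric.mem_ball] at hzy ⊢
    calc dist x y ≤ dist x z + dist z y := dist_triangle _ _ _
    _ < ρ/2 + ρ/2 := add_lt_add hzx hzy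
    _ = ρ := by ring⟩


end SeqTightAux

namespace SeqTightAux2
open SeqTightAux

variable {X : Type*} [MetricSpace X] [MeasurableSpace X] [BorelSpace X]

lemma liminf_le_liminf_comp' {u : ℕ → ℝ≥0∞} {φ : ℕ → ℕ} (hφ : StrictMono φ) :
    Filter.liminf u Filter.atTop ≤ Filter.liminf (fun n => u (φ n)) Filter.atTop := by
  have h := Filter.liminf_le_liminf_of_le (f := Filter.atTop)
    (g := Filter.map φ Filter.atTop) hφ.tendsto_atTop (u := u)
  rw [← Filter.liminf_comp] at h
  exact h

theorem seq_imp_asymp (μ : ℕ → ProbabilityMeasure X)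
    (hseq : ∀ ε : ℝ, 0 < ε → ∃ K : ℝ → Set X,
        (∀ δ : ℝ, 0 < δ → IsCompact (K δ)) ∧
        (∀ δ : ℝ, 0 < δ →
          ENNReal.ofReal (1 - ε) ≤
            Filter.liminf (fun n => (μ n : Measure X) (Metric.thickening δ (K δ)))
              Filter.atTop) ∧
        IsComplete (closure (⋃ δ ∈ Set.Ioi (0 : ℝ), K δ))) :
    ∀ ε : ℝ, 0 < ε → ∃ K : Set X, IsCompact K ∧
      ∀ G : Set X, IsOpen G → K ⊆ G →
        ENNReal.ofReal (1 - ε) ≤ Filter.liminf (fun n => (μ n : Measure X) G) Filter.atTop := by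
  intro ε hε
  rcases le_or_gt 1 ε with hε1 | hε1
  · refine ⟨∅, isCompact_empty, fun G _ _ => ?_⟩
    simp [ENNReal.ofReal_eq_zero.2 (by linarith : 1 - ε ≤ 0)]
  -- grounding family at level ε/2
  obtain ⟨κ, hκcpt, hκmass, hκcompl⟩ := hseq (ε/2) (by linarith)
  set C : Set X := closure (⋃ δ ∈ Set.Ioi (0 : ℝ), κ δ) with hC
  have hCclosed : IsClosed C := isClosed_closure
  have hκsubC : ∀ δ : ℝ, 0 < δ → κ δ ⊆ C := fun δ hδ =>
    (Set.subset_biUnion_of_mem hδ).trans subset_closure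
  -- chain families
  set e : ℕ → ℝ := fun l => ε / 2 ^ (l + 3) with he
  have hepos : ∀ l, 0 < e l := fun l => by positivity
  set δ : ℕ → ℝ := fun l => (1/2 : ℝ) ^ (l + 1) with hδdef
  have hδpos : ∀ l, 0 < δ l := fun l => by positivity
  have hδsucc : ∀ l, δ (l + 1) = δ l / 2 := fun l => by
    simp only [hδdef]; rw [pow_succ]; ring
  have H : ∀ l : ℕ, ∃ K : ℝ → Set X,
      (∀ d : ℝ, 0 < d → IsCompact (K d)) ∧
      (∀ d : ℝ, 0 < d →
        ENNReal.ofReal (1 - e l) ≤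
          Filter.liminf (fun n => (μ n : Measure X) (Metric.thickening d (K d)))
            Filter.atTop) ∧
      IsComplete (closure (⋃ d ∈ Set.Ioi (0 : ℝ), K d)) := fun l => hseq (e l) (hepos l)
  choose F hFcpt hFmass _hFcompl using H
  set L : ℕ → Set X := fun l => F l (δ l) with hL
  have hLcpt : ∀ l, IsCompact (L l) := fun l => hFcpt l (δ l) (hδpos l)
  have hLmass : ∀ l, ENNReal.ofReal (1 - e l) ≤
      Filter.liminf (fun n => (μ n : Measure X) (Metric.thickening (δ l) (L l)))
        Filter.atTop := fun l => hFmass l (δ l) (hδpos l)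
  -- the chain of compacts
  set M : ℕ → Set X := fun l => Nat.rec (L 0)
    (fun l Ml => L (l + 1) ∩ {x | Metric.infDist x Ml ≤ 2 * δ l}) l with hM
  have hM0 : M 0 = L 0 := rfl
  have hMsucc : ∀ l, M (l + 1) = L (l + 1) ∩ {x | Metric.infDist x (M l) ≤ 2 * δ l} :=
    fun l => rfl
  have hMcpt : ∀ l, IsCompact (M l) := by
    intro l
    induction l with
    | zero => exact hLcpt 0
    | succ l ih =>
      rw [hMsucc]
      exact (hLcpt (l+1)).inter_right
        (isClosed_le (Metric.continuous_infDist_pt _) continuous_const)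
  -- partial deficits
  set s : ℕ → ℝ := fun l => Nat.rec (e 0) (fun l sl => sl + e (l + 1)) l with hs
  have hs0 : s 0 = e 0 := rfl
  have hssucc : ∀ l, s (l + 1) = s l + e (l + 1) := fun l => rfl
  have hsbound : ∀ l, s l ≤ ε/4 - ε / 2 ^ (l + 3) := by
    intro l
    induction l with
    | zero =>
      simp only [hs0, he]
      norm_num
      linarith
    | succ l ih =>
      rw [hssucc]
      have : (2:ℝ) ^ (l + 1 + 3) = 2 * 2 ^ (l + 3) := by ring
      simp only [he] at ih ⊢
      rw [this]
      have h2 : (0:ℝ) < 2 ^ (l + 3) := by positivity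
      have : ε / (2 * 2 ^ (l + 3)) = (ε / 2 ^ (l+3)) / 2 := by ring
      rw [this]
      linarith
  have hsle : ∀ l, s l ≤ ε/4 := fun l => (hsbound l).trans (by
    have : (0:ℝ) < ε / 2 ^ (l+3) := by positivity
    linarith)
  -- chain mass bound
  have hMmass : ∀ l, ENNReal.ofReal (1 - s l) ≤
      Filter.liminf (fun n => (μ n : Measure X) (Metric.thickening (δ l) (M l)))
        Filter.atTop := by
    intro l
    induction l with
    | zero => simpa [hM0, hs0] using hLmass 0
    | succ l ih =>
      -- inclusion
      have hincl : Metric.thickening (δ (l+1)) (L (l+1)) ∩ Metric.thickening (δ l) (M l)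
          ⊆ Metric.thickening (δ (l+1)) (M (l+1)) := by
        intro x hx
        obtain ⟨y, hyL, hxy⟩ := Metric.mem_thickening_iff.1 hx.1
        obtain ⟨w, hwM, hxw⟩ := Metric.mem_thickening_iff.1 hx.2
        refine Metric.mem_thickening_iff.2 ⟨y, ?_, hxy⟩
        rw [hMsucc]
        refine ⟨hyL, ?_⟩
        have : dist y w ≤ dist y x + dist x w := dist_triangle _ _ _
        have hd : dist y w < δ (l+1) + δ l := by
          rw [dist_comm y x] at this
          linarith
        have hδle : δ (l+1) ≤ δ l := by rw [hδsucc]; linarith [hδpos l]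
        calc Metric.infDist y (M l) ≤ dist y w := Metric.infDist_le_dist_of_mem hwM
        _ ≤ 2 * δ l := by linarith
      apply ofReal_le_liminf_of_forall
      intro θ hθ
      have ev1 := eventually_ofReal_le_of_le_liminf (hLmass (l+1)) (show 0 < θ/2 by linarith)
      have ev2 := eventually_ofReal_le_of_le_liminf ih (show 0 < θ/2 by linarith)
      filter_upwards [ev1, ev2] with n h1 h2
      have hint := ofReal_le_inter (μ n : Measure X)
        (Metric.isOpen_thickening.measurableSet) h1 h2
      calc ENNReal.ofReal (1 - s (l+1) - θ)
          = ENNReal.ofReal ((1 - e (l+1) - θ/2) + (1 - s l - θ/2) - 1) := by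
            rw [hssucc]; ring_nf
        _ ≤ (μ n : Measure X) (Metric.thickening (δ (l+1)) (L (l+1)) ∩
              Metric.thickening (δ l) (M l)) := hint
        _ ≤ (μ n : Measure X) (Metric.thickening (δ (l+1)) (M (l+1))) :=
            measure_mono hincl
  -- nonemptiness of chain sets
  have hMne : ∀ l, (M l).Nonempty := by
    intro l
    rw [Set.nonempty_iff_ne_empty]
    intro hemp
    have h0 := hMmass l
    rw [hemp] at h0
    simp only [Metric.thickening_empty, measure_empty] at h0
    rw [Filter.liminf_const] at h0
    have : (0:ℝ) < 1 - s l := by have := hsle l; linarith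
    rw [ENNReal.ofReal_le_iff_le_toReal (by simp)] at h0
    simp at h0
    linarith
  -- nested thickenings
  set Θ : ℕ → Set X := fun l => Metric.thickening (4 * δ l) (M l) with hΘ
  have hΘnested : ∀ l, Θ (l + 1) ⊆ Θ l := by
    intro l x hx
    obtain ⟨y, hyM, hxy⟩ := Metric.mem_thickening_iff.1 hx
    have hyd : Metric.infDist y (M l) ≤ 2 * δ l := (by
      have := (hMsucc l) ▸ hyM
      exact this.2)
    have hσ : 0 < 4 * δ (l+1) - dist x y := by linarith
    have : Metric.infDist y (M l) < 2 * δ l + (4 * δ (l+1) - dist x y) := by linarith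
    obtain ⟨w, hwM, hyw⟩ := (Metric.infDist_lt_iff (hMne l)).1 this
    refine Metric.mem_thickening_iff.2 ⟨w, hwM, ?_⟩
    have h4 : 4 * δ (l+1) = 2 * δ l := by rw [hδsucc]; ring
    calc dist x w ≤ dist x y + dist y w := dist_triangle _ _ _
    _ < dist x y + (2 * δ l + (4 * δ (l+1) - dist x y)) := by linarith
    _ = 2 * δ l + 4 * δ (l+1) := by ring
    _ ≤ 4 * δ l := by rw [h4]; linarith [hδpos l]
  have hΘmono : ∀ r l, r ≤ l → Θ l ⊆ Θ r := by
    intro r l hrl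
    induction l with
    | zero => simp only [Nat.le_zero] at hrl; rw [hrl]
    | succ l ih =>
      rcases Nat.lt_or_ge r (l+1) with h | h
      · exact (hΘnested l).trans (ih (Nat.lt_succ_iff.1 h))
      · have : r = l + 1 := le_antisymm hrl h
        rw [this]
  -- the candidate compact set
  set K : Set X := C ∩ ⋂ l : ℕ, closure (Θ l) with hK
  have hKclosed : IsClosed K := hCclosed.inter (isClosed_iInter fun l => isClosed_closure)
  have hKsubC : K ⊆ C := Set.inter_subset_left
  have hKsubΘ : ∀ l, K ⊆ closure (Θ l) := fun l =>
    Set.inter_subset_right.trans (Set.iInter_subset _ l)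
  have hKcpt : IsCompact K := by
    rw [isCompact_iff_totallyBounded_isComplete]
    constructor
    · apply totallyBounded_of_near_compact
      intro ρ hρ
      obtain ⟨l, hl⟩ : ∃ l : ℕ, 5 * δ l < ρ := by
        obtain ⟨l, hl⟩ := exists_pow_lt_of_lt_one (show 0 < ρ/5 by linarith)
          (show (1/2:ℝ) < 1 by norm_num)
        exact ⟨l, by
          have : δ l ≤ (1/2:ℝ)^l := by
            simp only [hδdef]
            apply pow_le_pow_of_le_one (by norm_num) (by norm_num)
            omega
          nlinarith⟩
      refine ⟨M l, hMcpt l, ?_⟩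
      refine (hKsubΘ l).trans ?_
      refine (Metric.closure_thickening_subset_cthickening _ _).trans ?_
      exact Metric.cthickening_subset_thickening' hρ (by linarith) _
    · exact isComplete_of_isClosed_subset
        (by rw [hC] at *; exact hκcompl) hKclosed hKsubC
  -- key approximation claim
  have hclaim : ∀ η : ℝ, 0 < η → ∃ l : ℕ, ∃ dC : ℝ, 0 < dC ∧
      Θ l ∩ Metric.thickening dC C ⊆ Metric.thickening η K := by
    intro η hη
    by_contra hcon
    push_neg at hcon
    have hpick : ∀ j : ℕ, ∃ x : X,
        x ∈ Θ j ∩ Metric.thickening (1/(j+1) : ℝ) C ∧ x ∉ Metric.thickening η K := by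
      intro j
      have := hcon j (1/(j+1) : ℝ) (by positivity)
      rw [Set.not_subset] at this
      obtain ⟨x, hx1, hx2⟩ := this
      exact ⟨x, hx1, hx2⟩
    choose x hx1 hx2 using hpick
    have hz : ∀ j : ℕ, ∃ z ∈ C, dist (x j) z < 1/(j+1) := by
      intro j
      exact Metric.mem_thickening_iff.1 (hx1 j).2
    choose z hzC hzd using hz
    -- total boundedness of the range of z
    have hxΘ : ∀ r j, r ≤ j → x j ∈ Θ r := fun r j hrj => hΘmono r j hrj (hx1 j).1
    have hTB : TotallyBounded (Set.range z) := by
      rw [Metric.totallyBounded_iff]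
      intro ρ hρ
      obtain ⟨r, hr⟩ : ∃ r : ℕ, 4 * δ r < ρ/4 := by
        obtain ⟨l, hl⟩ := exists_pow_lt_of_lt_one (show 0 < ρ/16 by linarith)
          (show (1/2:ℝ) < 1 by norm_num)
        refine ⟨l, ?_⟩
        have : δ l ≤ (1/2:ℝ)^l := by
          simp only [hδdef]
          apply pow_le_pow_of_le_one (by norm_num) (by norm_num)
          omega
        nlinarith
      obtain ⟨J, hJ⟩ : ∃ J : ℕ, (1/(J+1) : ℝ) < ρ/4 ∧ r ≤ J := by
        obtain ⟨J, hJ⟩ := exists_nat_gt (4/ρ)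
        refine ⟨max J r, ?_, le_max_right _ _⟩
        have h1 : (4/ρ : ℝ) < max J r + 1 := by
          have : (J:ℝ) ≤ max J r := by exact_mod_cast Nat.cast_le.2 (le_max_left J r)
          linarith
        rw [div_lt_div_iff₀ (by positivity) (by linarith)]
        rw [div_lt_iff₀ (by linarith : (0:ℝ) < ρ)] at h1
        nlinarith [hρ]
      obtain ⟨t, htfin, htM⟩ := Metric.totallyBounded_iff.1 (hMcpt r).totallyBounded
        (ρ/4) (by linarith)
      -- centers: t plus the finitely many initial z j
      refine ⟨t ∪ (z '' {j : ℕ | j < J+1}), ?_, ?_⟩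
      · exact htfin.union ((Set.finite_Iio (J+1)).image z)
      · rintro w ⟨j, rfl⟩
        rcases Nat.lt_or_ge j (J+1) with hj | hj
        · have hj' : j ∈ {j : ℕ | j < J+1} := hj
          apply Set.mem_biUnion (Set.mem_union_right _ (Set.mem_image_of_mem z hj'))
          simp only [Metric.mem_ball, dist_self]
          exact hρ
        · -- j ≥ J+1 : z j is near M r
          have hjr : r ≤ j := le_trans hJ.2 (by omega)
          obtain ⟨y, hyM, hxy⟩ := Metric.mem_thickening_iff.1 (hxΘ r j hjr)
          obtain ⟨c, hct, hyc⟩ := Set.mem_iUnion₂.1 (htM hyM)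
          apply Set.mem_biUnion (Set.mem_union_left _ hct)
          have hjJ : (1/(j+1) : ℝ) ≤ 1/(J+1) := by
            apply div_le_div_of_nonneg_left (by norm_num) (by positivity)
            have : (J:ℝ) ≤ j := by exact_mod_cast Nat.cast_le.2 (by omega)
            linarith
          simp only [Metric.mem_ball] at hyc ⊢
          calc dist (z j) c ≤ dist (z j) (x j) + dist (x j) y + dist y c :=
                dist_triangle4 _ _ _ _
          _ < 1/(j+1) + 4 * δ r + ρ/4 := by
              rw [dist_comm (z j) (x j)]
              exact add_lt_add (add_lt_add (hzd j) hxy) hyc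
          _ ≤ ρ/4 + ρ/4 + ρ/4 := by
              have h1 := hJ.1
              linarith [hjJ, hr]
          _ < ρ := by linarith
    -- extract convergent subsequence
    have hsubC : closure (Set.range z) ⊆ C := by
      rw [← hCclosed.closure_eq]
      exact closure_mono (Set.range_subset_iff.2 hzC)
    have hcls_cpt : IsCompact (closure (Set.range z)) := by
      rw [isCompact_iff_totallyBounded_isComplete]
      exact ⟨hTB.closure, isComplete_of_isClosed_subset hκcompl isClosed_closure hsubC⟩
    obtain ⟨xstar, hxstar_mem, φ, hφ, hφtend⟩ := hcls_cpt.tendsto_subseq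
      (x := z) (fun j => subset_closure (Set.mem_range_self j))
    -- x ∘ φ also tends to xstar
    have hxtend : Filter.Tendsto (fun j => x (φ j)) Filter.atTop (𝓝 xstar) := by
      rw [Metric.tendsto_atTop]
      intro ρ hρ
      obtain ⟨N1, hN1⟩ := Metric.tendsto_atTop.1 hφtend (ρ/2) (by linarith)
      obtain ⟨N2, hN2⟩ := exists_nat_gt (2/ρ)
      refine ⟨max N1 N2, fun n hn => ?_⟩
      have h1 := hN1 n (le_trans (le_max_left _ _) hn)
      have hφn : (N2:ℝ) ≤ φ n := by
        have : n ≤ φ n := hφ.le_apply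
        have h2 : N2 ≤ n := le_trans (le_max_right _ _) hn
        exact_mod_cast Nat.cast_le.2 (le_trans h2 this)
      have h3 : dist (x (φ n)) (z (φ n)) < ρ/2 := by
        refine lt_of_lt_of_le (hzd (φ n)) ?_
        rw [div_le_iff₀ (by positivity)]
        rw [div_lt_iff₀ (by linarith : (0:ℝ) < ρ)] at hN2
        nlinarith
      calc dist (x (φ n)) xstar ≤ dist (x (φ n)) (z (φ n)) + dist (z (φ n)) xstar :=
            dist_triangle _ _ _
      _ < ρ/2 + ρ/2 := add_lt_add h3 h1
      _ = ρ := by ring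
    -- xstar ∈ K
    have hxstarK : xstar ∈ K := by
      refine ⟨hsubC hxstar_mem, Set.mem_iInter.2 fun r => ?_⟩
      apply mem_closure_of_tendsto hxtend
      filter_upwards [Filter.eventually_ge_atTop r] with j hj
      exact hxΘ r (φ j) (le_trans hj hφ.le_apply)
    -- contradiction
    obtain ⟨N, hN⟩ := Metric.tendsto_atTop.1 hxtend η hη
    have := hx2 (φ N)
    apply this
    exact Metric.mem_thickening_iff.2 ⟨xstar, hxstarK, hN N le_rfl⟩
  -- conclusion
  refine ⟨K, hKcpt, fun G hGopen hKG => ?_⟩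
  obtain ⟨η, hηpos, hηsub⟩ := hKcpt.exists_thickening_subset_open hGopen hKG
  obtain ⟨l, dC, hdC, hsub⟩ := hclaim η hηpos
  have hmassC : ENNReal.ofReal (1 - ε/2) ≤
      Filter.liminf (fun n => (μ n : Measure X) (Metric.thickening dC C)) Filter.atTop := by
    refine le_trans (hκmass dC hdC) ?_
    exact Filter.liminf_le_liminf <| Filter.Eventually.of_forall fun n =>
      measure_mono (Metric.thickening_subset_of_subset _ (hκsubC dC hdC))
  have hmassΘ : ENNReal.ofReal (1 - s l) ≤
      Filter.liminf (fun n => (μ n : Measure X) (Θ l)) Filter.atTop := by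
    refine le_trans (hMmass l) ?_
    exact Filter.liminf_le_liminf <| Filter.Eventually.of_forall fun n =>
      measure_mono (Metric.thickening_mono (by linarith [hδpos l]) _)
  have hfinal : ENNReal.ofReal (1 - s l - ε/2) ≤
      Filter.liminf (fun n => (μ n : Measure X) G) Filter.atTop := by
    apply ofReal_le_liminf_of_forall
    intro θ hθ
    have ev1 := eventually_ofReal_le_of_le_liminf hmassΘ (show 0 < θ/2 by linarith)
    have ev2 := eventually_ofReal_le_of_le_liminf hmassC (show 0 < θ/2 by linarith)
    filter_upwards [ev1, ev2] with n h1 h2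
    have hint := ofReal_le_inter (μ n : Measure X)
      (Metric.isOpen_thickening.measurableSet) h1 h2
    calc ENNReal.ofReal (1 - s l - ε/2 - θ)
        = ENNReal.ofReal ((1 - s l - θ/2) + (1 - ε/2 - θ/2) - 1) := by ring_nf
      _ ≤ (μ n : Measure X) (Θ l ∩ Metric.thickening dC C) := hint
      _ ≤ (μ n : Measure X) G := measure_mono (hsub.trans hηsub)
  refine le_trans ?_ hfinal
  apply ENNReal.ofReal_le_ofReal
  have := hsle l
  linarith

end SeqTightAux2

namespace SeqTightAux3
open SeqTightAux SeqTightAux2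

variable {X : Type*} [MetricSpace X] [MeasurableSpace X] [BorelSpace X]

lemma ofReal_le_of_forall_sub {a : ℝ≥0∞} {r : ℝ}
    (h : ∀ θ : ℝ, 0 < θ → ENNReal.ofReal (r - θ) ≤ a) : ENNReal.ofReal r ≤ a := by
  rcases le_or_gt r 0 with hr | hr
  · simp [ENNReal.ofReal_eq_zero.2 hr]
  · refine le_of_forall_lt fun c hc => ?_
    have hc' : c ≠ ⊤ := (lt_of_lt_of_le hc le_top).ne
    have hct : c.toReal < r := (ENNReal.lt_ofReal_iff_toReal_lt hc').1 hc
    set θ := (r - c.toReal) / 2 with hθ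
    have hθpos : 0 < θ := by simp only [hθ]; linarith
    have hcr : c < ENNReal.ofReal (r - θ) := by
      rw [ENNReal.lt_ofReal_iff_toReal_lt hc']
      simp only [hθ]; linarith
    exact lt_of_lt_of_le hcr (h θ hθpos)

theorem asymp_imp_seq (μ : ℕ → ProbabilityMeasure X)
    (hasymp : ∀ ε : ℝ, 0 < ε → ∃ K : Set X, IsCompact K ∧
      ∀ G : Set X, IsOpen G → K ⊆ G →
        ENNReal.ofReal (1 - ε) ≤ Filter.liminf (fun n => (μ n : Measure X) G) Filter.atTop) :
    ∀ ε : ℝ, 0 < ε → ∃ K : ℝ → Set X,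
        (∀ δ : ℝ, 0 < δ → IsCompact (K δ)) ∧
        (∀ δ : ℝ, 0 < δ →
          ENNReal.ofReal (1 - ε) ≤
            Filter.liminf (fun n => (μ n : Measure X) (Metric.thickening δ (K δ)))
              Filter.atTop) ∧
        IsComplete (closure (⋃ δ ∈ Set.Ioi (0 : ℝ), K δ)) := by
  intro ε hε
  obtain ⟨K, hK, hmass⟩ := hasymp ε hε
  refine ⟨fun _ => K, fun δ hδ => hK, fun δ hδ =>
    hmass _ Metric.isOpen_thickening (Metric.self_subset_thickening hδ K), ?_⟩
  rw [Set.biUnion_const Set.nonempty_Ioi, hK.isClosed.closure_eq]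
  exact hK.isComplete

theorem asymp_imp_Ltight (μ : ℕ → ProbabilityMeasure X)
    (L : Set (ProbabilityMeasure X))
    (hL : L = ⋂ n : ℕ, closure {ν : ProbabilityMeasure X | ∃ k : ℕ, n ≤ k ∧ ν = μ k})
    (hasymp : ∀ ε : ℝ, 0 < ε → ∃ K : Set X, IsCompact K ∧
      ∀ G : Set X, IsOpen G → K ⊆ G →
        ENNReal.ofReal (1 - ε) ≤ Filter.liminf (fun n => (μ n : Measure X) G) Filter.atTop) :
    ∀ ε : ℝ, 0 < ε → ∃ K : Set X, IsCompact K ∧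
      ∀ ν ∈ L, ENNReal.ofReal (1 - ε) ≤ (ν : Measure X) K := by
  intro ε hε
  obtain ⟨K, hK, hmass⟩ := hasymp ε hε
  refine ⟨K, hK, fun ν hν => ?_⟩
  -- step 1 : closed thickenings
  have step1 : ∀ d : ℝ, 0 < d → ∀ θ : ℝ, 0 < θ →
      ENNReal.ofReal (1 - ε - θ) ≤ (ν : Measure X) (Metric.cthickening d K) := by
    intro d hd θ hθ
    have hth := hmass (Metric.thickening d K) Metric.isOpen_thickening
      (Metric.self_subset_thickening hd K)
    obtain ⟨N, hN⟩ := Filter.eventually_atTop.1 (eventually_ofReal_le_of_le_liminf hth hθ)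
    set S : Set (ProbabilityMeasure X) := {ρ | ∃ k : ℕ, N ≤ k ∧ ρ = μ k} with hS
    have hνS : ν ∈ closure S := by
      rw [hL] at hν
      exact Set.mem_iInter.1 hν N
    haveI : (𝓝[S] ν).NeBot := mem_closure_iff_nhdsWithin_neBot.1 hνS
    have hid : Filter.Tendsto (id : ProbabilityMeasure X → ProbabilityMeasure X)
        (𝓝[S] ν) (𝓝 ν) := nhdsWithin_le_nhds
    have hup := MeasureTheory.ProbabilityMeasure.limsup_measure_closed_le_of_tendsto
      hid (Metric.isClosed_cthickening (δ := d) (E := K))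
    refine le_trans ?_ hup
    refine Filter.le_limsup_of_frequently_le ?_ (by isBoundedDefault)
    apply Filter.Eventually.frequently
    filter_upwards [eventually_mem_nhdsWithin] with ρ hρ
    obtain ⟨k, hk, rfl⟩ := hρ
    exact le_trans (hN k hk) (measure_mono (Metric.thickening_subset_cthickening _ _))
  have step2 : ∀ d : ℝ, 0 < d →
      ENNReal.ofReal (1 - ε) ≤ (ν : Measure X) (Metric.cthickening d K) :=
    fun d hd => ofReal_le_of_forall_sub (fun θ hθ => step1 d hd θ hθ)
  -- step 3 : shrink to K
  have hKeq : (⋂ j : ℕ, Metric.cthickening (1/(j+1) : ℝ) K) = K := by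
    apply Set.Subset.antisymm
    · intro x hx
      have hxc : x ∈ closure K := by
        rw [Metric.closure_eq_iInter_cthickening]
        refine Set.mem_iInter.2 fun d => Set.mem_iInter.2 fun hd => ?_
        obtain ⟨j, hj⟩ := exists_nat_gt (1/d)
        have hj1 : (1/(j+1) : ℝ) ≤ d := by
          rw [div_le_iff₀ (by positivity)]
          rw [div_lt_iff₀ hd] at hj
          nlinarith
        exact Metric.cthickening_mono hj1 K (Set.mem_iInter.1 hx j)
      rwa [hK.isClosed.closure_eq] at hxc
    · exact Set.subset_iInter fun j => Metric.self_subset_cthickening K (δ := 1/(j+1))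
  calc ENNReal.ofReal (1 - ε)
      ≤ ⨅ j : ℕ, (ν : Measure X) (Metric.cthickening (1/(j+1) : ℝ) K) :=
        le_iInf fun j => step2 _ (by positivity)
    _ = (ν : Measure X) (⋂ j : ℕ, Metric.cthickening (1/(j+1) : ℝ) K) := by
        refine (Directed.measure_iInter
          (fun j => (Metric.isClosed_cthickening).measurableSet.nullMeasurableSet)
          ?_ ⟨0, measure_ne_top _ _⟩).symm
        intro j k
        have hjm : ((j:ℝ)+1) ≤ ((max j k : ℕ):ℝ)+1 := by
          have : (j:ℝ) ≤ ((max j k : ℕ):ℝ) := by exact_mod_cast le_max_left j k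
          linarith
        have hkm : ((k:ℝ)+1) ≤ ((max j k : ℕ):ℝ)+1 := by
          have : (k:ℝ) ≤ ((max j k : ℕ):ℝ) := by exact_mod_cast le_max_right j k
          linarith
        exact ⟨max j k, Metric.cthickening_mono (one_div_le_one_div_of_le (by positivity) hjm) K,
          Metric.cthickening_mono (one_div_le_one_div_of_le (by positivity) hkm) K⟩
    _ = (ν : Measure X) K := by rw [hKeq]

end SeqTightAux3

namespace SeqTightAux4
open SeqTightAux SeqTightAux2 SeqTightAux3

variable {X : Type*} [MetricSpace X] [MeasurableSpace X] [BorelSpace X]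

theorem precompact_Ltight_imp_asymp (μ : ℕ → ProbabilityMeasure X)
    (L : Set (ProbabilityMeasure X))
    (hL : L = ⋂ n : ℕ, closure {ν : ProbabilityMeasure X | ∃ k : ℕ, n ≤ k ∧ ν = μ k})
    (hpre : ∀ φ : ℕ → ℕ, StrictMono φ →
          ∃ ψ : ℕ → ℕ, StrictMono ψ ∧ ∃ ν : ProbabilityMeasure X,
            Filter.Tendsto (fun j => μ (φ (ψ j))) Filter.atTop (𝓝 ν))
    (htight : ∀ ε : ℝ, 0 < ε → ∃ K : Set X, IsCompact K ∧
          ∀ ν ∈ L, ENNReal.ofReal (1 - ε) ≤ (ν : Measure X) K) :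
    ∀ ε : ℝ, 0 < ε → ∃ K : Set X, IsCompact K ∧
      ∀ G : Set X, IsOpen G → K ⊆ G →
        ENNReal.ofReal (1 - ε) ≤ Filter.liminf (fun n => (μ n : Measure X) G) Filter.atTop := by
  intro ε hε
  rcases le_or_gt 1 ε with hε1 | hε1
  · refine ⟨∅, isCompact_empty, fun G _ _ => ?_⟩
    simp [ENNReal.ofReal_eq_zero.2 (by linarith : 1 - ε ≤ 0)]
  obtain ⟨K, hK, htK⟩ := htight (ε/2) (by linarith)
  refine ⟨K, hK, fun G hGopen hKG => ?_⟩
  by_contra hlt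
  push_neg at hlt
  have hfreq : ∃ᶠ n in Filter.atTop,
      (μ n : Measure X) G < ENNReal.ofReal (1 - ε) :=
    Filter.frequently_lt_of_liminf_lt (by isBoundedDefault) hlt
  obtain ⟨φ, hφ, hφlt⟩ := Filter.extraction_of_frequently_atTop hfreq
  obtain ⟨ψ, hψ, ν, hν⟩ := hpre φ hφ
  have hνL : ν ∈ L := by
    rw [hL]
    refine Set.mem_iInter.2 fun n => ?_
    apply mem_closure_of_tendsto hν
    filter_upwards [Filter.eventually_ge_atTop n] with j hj
    exact ⟨φ (ψ j), le_trans hj (le_trans hψ.le_apply hφ.le_apply), rfl⟩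
  have hop := MeasureTheory.ProbabilityMeasure.le_liminf_measure_open_of_tendsto hν hGopen
  have hup : Filter.liminf (fun j => (μ (φ (ψ j)) : Measure X) G) Filter.atTop
      ≤ ENNReal.ofReal (1 - ε) := by
    refine Filter.liminf_le_of_frequently_le ?_ (by isBoundedDefault)
    exact Filter.Eventually.frequently
      (Filter.Eventually.of_forall fun j => (hφlt (ψ j)).le)
  have h1 : ENNReal.ofReal (1 - ε/2) ≤ (ν : Measure X) K := htK ν hνL
  have h2 : (ν : Measure X) K ≤ (ν : Measure X) G := measure_mono hKG
  have h3 : ENNReal.ofReal (1 - ε) < ENNReal.ofReal (1 - ε/2) := by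
    rw [ENNReal.ofReal_lt_ofReal_iff (by linarith)]
    linarith
  exact absurd (lt_of_le_of_lt (h2.trans (hop.trans hup)) h3) (not_lt.2 h1)

end SeqTightAux4

namespace SeqTightAux5

variable {X : Type*} [MetricSpace X] [MeasurableSpace X] [BorelSpace X]


lemma liminf_comp' {u : ℕ → ℝ≥0∞} {φ : ℕ → ℕ} (hφ : StrictMono φ) :
    Filter.liminf u Filter.atTop ≤ Filter.liminf (fun n => u (φ n)) Filter.atTop := by
  have h := Filter.liminf_le_liminf_of_le (f := Filter.atTop)
    (g := Filter.map φ Filter.atTop) hφ.tendsto_atTop (u := u)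
  rw [← Filter.liminf_comp] at h
  exact h

lemma ofReal_sub' {a : ℝ≥0∞} {r : ℝ}
    (h : ∀ θ : ℝ, 0 < θ → ENNReal.ofReal (r - θ) ≤ a) : ENNReal.ofReal r ≤ a := by
  rcases le_or_gt r 0 with hr | hr
  · simp [ENNReal.ofReal_eq_zero.2 hr]
  · refine le_of_forall_lt fun c hc => ?_
    have hc' : c ≠ ⊤ := (lt_of_lt_of_le hc le_top).ne
    have hct : c.toReal < r := (ENNReal.lt_ofReal_iff_toReal_lt hc').1 hc
    have hcr : c < ENNReal.ofReal (r - (r - c.toReal)/2) := by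
      rw [ENNReal.lt_ofReal_iff_toReal_lt hc']
      linarith
    exact lt_of_lt_of_le hcr (h _ (by linarith))

/-- Prokhorov-type construction: an asymptotically tight sequence of probability measures
has a weakly convergent subsequence. -/
theorem exists_tendsto_of_asymp (ν : ℕ → ProbabilityMeasure X)
    (hasymp : ∀ ε : ℝ, 0 < ε → ∃ K : Set X, IsCompact K ∧
      ∀ G : Set X, IsOpen G → K ⊆ G →
        ENNReal.ofReal (1 - ε) ≤ Filter.liminf (fun n => (ν n : Measure X) G) Filter.atTop) :
    ∃ ψ : ℕ → ℕ, StrictMono ψ ∧ ∃ ρ : ProbabilityMeasure X,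
      Filter.Tendsto (fun j => ν (ψ j)) Filter.atTop (𝓝 ρ) := by
  classical
  -- X is nonempty
  rcases isEmpty_or_nonempty X with hX | hX
  · exfalso
    have h1 : (ν 0 : Measure X) Set.univ = 1 := measure_univ
    rw [Set.univ_eq_empty_iff.2 hX, measure_empty] at h1
    exact zero_ne_one h1
  obtain ⟨x₀⟩ := hX
  -- the compacts
  have hKm : ∀ m : ℕ, ∃ K : Set X, IsCompact K ∧
      ∀ G : Set X, IsOpen G → K ⊆ G →
        ENNReal.ofReal (1 - 1/(m+1)) ≤ Filter.liminf (fun n => (ν n : Measure X) G)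
          Filter.atTop := fun m => hasymp (1/(m+1)) (by positivity)
  choose Km hKmc hKmm using hKm
  -- a countable dense set for the compacts
  have hsep : TopologicalSpace.IsSeparable (⋃ m, Km m) :=
    TopologicalSpace.IsSeparable.iUnion fun m => (hKmc m).isSeparable
  obtain ⟨c, hc_count, hc_sub⟩ := hsep
  have hc'_count : (insert x₀ c).Countable := hc_count.insert x₀
  obtain ⟨d, hd⟩ := hc'_count.exists_eq_range ⟨x₀, Set.mem_insert _ _⟩
  have hdense : ∀ m, Km m ⊆ closure (Set.range d) := by
    intro m
    refine (Set.subset_iUnion (fun m => Km m) m).trans (hc_sub.trans (closure_mono ?_))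
    rw [← hd]
    exact Set.subset_insert _ _
  -- the countable family of closed sets
  set A : Finset (ℕ × ℚ) → Set X :=
    fun J => ⋃ p ∈ J, Metric.closedBall (d p.1) (p.2 : ℝ) with hA
  have hAclosed : ∀ J, IsClosed (A J) := fun J =>
    (J.finite_toSet).isClosed_biUnion fun p _ => Metric.isClosed_closedBall
  have hAmeas : ∀ J, MeasurableSet (A J) := fun J => (hAclosed J).measurableSet
  have hAunion : ∀ J J' : Finset (ℕ × ℚ), A (J ∪ J') = A J ∪ A J' := fun J J' => by
    classical
    simp only [hA]
    exact Finset.set_biUnion_union _ _ _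
  have hAempty : A ∅ = ∅ := by simp [hA]
  -- diagonal extraction
  set g : ℕ → (Finset (ℕ × ℚ) → ℝ≥0∞) := fun n J => (ν n : Measure X) (A J) with hg
  obtain ⟨α, -, ψ, hψ, hgψ⟩ := isCompact_univ.tendsto_subseq (x := g)
    (fun n => Set.mem_univ _)
  have hα : ∀ J, Filter.Tendsto (fun n => (ν (ψ n) : Measure X) (A J))
      Filter.atTop (𝓝 (α J)) := fun J => (tendsto_pi_nhds.1 hgψ) J
  -- basic properties of α
  have hα_le_one : ∀ J, α J ≤ 1 :=
    fun J => le_of_tendsto (hα J) (Filter.Eventually.of_forall fun n => prob_le_one)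
  have hα_empty : α ∅ = 0 := by
    have h0 : Filter.Tendsto (fun n : ℕ => (ν (ψ n) : Measure X) (A ∅))
        Filter.atTop (𝓝 0) := by
      simp only [hAempty, measure_empty]
      exact tendsto_const_nhds
    exact tendsto_nhds_unique (hα ∅) h0
  have hα_subadd : ∀ J J' : Finset (ℕ × ℚ), α (J ∪ J') ≤ α J + α J' := by
    intro J J'
    refine le_of_tendsto_of_tendsto' (hα (J ∪ J')) ((hα J).add (hα J')) fun n => ?_
    rw [hAunion]
    exact measure_union_le _ _
  have hα_add_disj : ∀ J J' : Finset (ℕ × ℚ), Disjoint (A J) (A J') →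
      α (J ∪ J') = α J + α J' := by
    intro J J' hdisj
    refine tendsto_nhds_unique (hα (J ∪ J')) ?_
    have : (fun n => (ν (ψ n) : Measure X) (A (J ∪ J')))
        = fun n => (ν (ψ n) : Measure X) (A J) + (ν (ψ n) : Measure X) (A J') := by
      funext n
      rw [hAunion]
      exact measure_union hdisj (hAmeas J')
    rw [this]
    exact (hα J).add (hα J')
  have hα_le_liminf : ∀ (J : Finset (ℕ × ℚ)) (G : Set X), A J ⊆ G →
      α J ≤ Filter.liminf (fun n => (ν (ψ n) : Measure X) G) Filter.atTop := by
    intro J G hJG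
    have h1 : α J = Filter.liminf (fun n => (ν (ψ n) : Measure X) (A J)) Filter.atTop :=
      ((hα J).liminf_eq).symm
    rw [h1]
    exact Filter.liminf_le_liminf (Filter.Eventually.of_forall fun n => measure_mono hJG)
  -- the set function
  set β : Set X → ℝ≥0∞ := fun U => ⨆ J : {J : Finset (ℕ × ℚ) // A J ⊆ U}, α J.1 with hβ
  have hβ_ne : ∀ U : Set X, Nonempty {J : Finset (ℕ × ℚ) // A J ⊆ U} := fun U =>
    ⟨⟨∅, by rw [hAempty]; exact Set.empty_subset _⟩⟩
  have hβ_witness : ∀ (J : Finset (ℕ × ℚ)) (U : Set X), A J ⊆ U → α J ≤ β U := by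
    intro J U hJU
    exact le_iSup (fun J' : {J : Finset (ℕ × ℚ) // A J ⊆ U} => α J'.1) ⟨J, hJU⟩
  have hβ_le_one : ∀ U, β U ≤ 1 := fun U => iSup_le fun J => hα_le_one J.1
  have hβ_empty : β ∅ = 0 := by
    refine le_antisymm (iSup_le fun J => ?_) (zero_le)
    have hAJ : A J.1 = ∅ := Set.subset_empty_iff.1 J.2
    have h0 : Filter.Tendsto (fun n : ℕ => (ν (ψ n) : Measure X) (A J.1))
        Filter.atTop (𝓝 0) := by
      rw [hAJ]
      simp only [measure_empty]
      exact tendsto_const_nhds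
    exact le_of_eq (tendsto_nhds_unique (hα J.1) h0)
  have hβ_le_liminf : ∀ G : Set X,
      β G ≤ Filter.liminf (fun n => (ν (ψ n) : Measure X) G) Filter.atTop :=
    fun G => iSup_le fun J => hα_le_liminf J.1 G J.2
  -- the outer measure
  set m₀ : Set X → ℝ≥0∞ := fun U => if IsOpen U then β U else ⊤ with hm₀
  have hm₀_empty : m₀ ∅ = 0 := by simp [hm₀, isOpen_empty, hβ_empty]
  set γ : OuterMeasure X := OuterMeasure.ofFunction m₀ hm₀_empty with hγ
  have hγ_le : ∀ U, γ U ≤ m₀ U := fun U => OuterMeasure.ofFunction_le U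
  -- key superadditivity of β on separated open pieces
  have hβ_super : ∀ (U TE TF : Set X), IsOpen U → IsOpen TE → IsOpen TF →
      Disjoint TE TF → β (U ∩ TE) + β (U ∩ TF) ≤ β U := by
    intro U TE TF _ _ _ hdisj
    have hcore : ∀ (J₁ J₂ : Finset (ℕ × ℚ)), A J₁ ⊆ U ∩ TE → A J₂ ⊆ U ∩ TF →
        α J₁ + α J₂ ≤ β U := by
      intro J₁ J₂ h1 h2
      have hd : Disjoint (A J₁) (A J₂) :=
        Set.disjoint_of_subset (h1.trans Set.inter_subset_right)
          (h2.trans Set.inter_subset_right) hdisj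
      rw [← hα_add_disj J₁ J₂ hd]
      refine hβ_witness (J₁ ∪ J₂) U ?_
      rw [hAunion]
      exact Set.union_subset (h1.trans Set.inter_subset_left)
        (h2.trans Set.inter_subset_left)
    haveI := hβ_ne (U ∩ TE)
    haveI := hβ_ne (U ∩ TF)
    exact ENNReal.iSup_add_iSup_le fun J₁ J₂ => hcore J₁.1 J₂.1 J₁.2 J₂.2

  -- A is monotone
  have hAmono : ∀ {J J' : Finset (ℕ × ℚ)}, J ⊆ J' → A J ⊆ A J' := by
    intro J J' hJJ
    simp only [hA]
    exact Set.biUnion_subset_biUnion_left hJJ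
  -- the outer measure is a metric outer measure
  have hmetric : γ.IsMetric := by
    intro E F hEF
    refine le_antisymm (measure_union_le E F) ?_
    obtain ⟨r, hr0, hrsep⟩ := hEF
    set r' : ℝ≥0∞ := min r 1 with hr'
    have hr'0 : r' ≠ 0 := by
      simp only [hr', ne_eq, min_eq_iff]
      intro hmin
      rcases hmin with ⟨h1, -⟩ | ⟨h1, -⟩
      · exact hr0 h1
      · exact one_ne_zero h1
    have hr'top : r' ≠ ⊤ := ((min_le_right r 1).trans_lt ENNReal.one_lt_top).ne
    set ρ : ℝ := r'.toReal / 3 with hρ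
    have hρpos : 0 < ρ := by
      have := ENNReal.toReal_pos hr'0 hr'top
      simp only [hρ]; linarith
    have hTdisj : Disjoint (Metric.thickening ρ E) (Metric.thickening ρ F) := by
      rw [Set.disjoint_left]
      intro x hxE hxF
      obtain ⟨e, heE, hex⟩ := Metric.mem_thickening_iff.1 hxE
      obtain ⟨f, hfF, hfx⟩ := Metric.mem_thickening_iff.1 hxF
      have h1 : edist e f ≤ ENNReal.ofReal (dist x e) + ENNReal.ofReal (dist x f) := by
        rw [← edist_dist, ← edist_dist]
        calc edist e f ≤ edist e x + edist x f := edist_triangle _ _ _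
        _ = edist x e + edist x f := by rw [edist_comm e x]
      have h2 : edist e f < ENNReal.ofReal ρ + ENNReal.ofReal ρ :=
        lt_of_le_of_lt h1 (ENNReal.add_lt_add
          ((ENNReal.ofReal_lt_ofReal_iff hρpos).2 hex)
          ((ENNReal.ofReal_lt_ofReal_iff hρpos).2 hfx))
      have h3 : ENNReal.ofReal ρ + ENNReal.ofReal ρ < r' := by
        rw [← ENNReal.ofReal_add hρpos.le hρpos.le]
        have : ρ + ρ < r'.toReal := by
          have := ENNReal.toReal_pos hr'0 hr'top
          simp only [hρ]; linarith
        calc ENNReal.ofReal (ρ + ρ) < ENNReal.ofReal r'.toReal := by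
              rw [ENNReal.ofReal_lt_ofReal_iff (ENNReal.toReal_pos hr'0 hr'top)]
              exact this
        _ = r' := ENNReal.ofReal_toReal hr'top
      have h4 : r' ≤ edist e f := le_trans (min_le_left r 1) (hrsep e heE f hfF)
      exact absurd (lt_of_le_of_lt h4 (h2.trans h3)) (lt_irrefl _)
    -- now the superadditivity
    rw [hγ]
    conv_rhs => rw [OuterMeasure.ofFunction_apply]
    refine le_iInf fun U => le_iInf fun hcov => ?_
    by_cases hop : ∀ i, IsOpen (U i)
    · have covE : E ⊆ ⋃ i, U i ∩ Metric.thickening ρ E := by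
        intro x hx
        obtain ⟨i, hi⟩ := Set.mem_iUnion.1 (hcov (Set.mem_union_left F hx))
        exact Set.mem_iUnion.2 ⟨i, hi, Metric.self_subset_thickening hρpos E hx⟩
      have covF : F ⊆ ⋃ i, U i ∩ Metric.thickening ρ F := by
        intro x hx
        obtain ⟨i, hi⟩ := Set.mem_iUnion.1 (hcov (Set.mem_union_right E hx))
        exact Set.mem_iUnion.2 ⟨i, hi, Metric.self_subset_thickening hρpos F hx⟩
      have hE1 : γ E ≤ ∑' i, m₀ (U i ∩ Metric.thickening ρ E) := by
        rw [hγ, OuterMeasure.ofFunction_apply]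
        exact iInf₂_le (fun i => U i ∩ Metric.thickening ρ E) covE
      have hF1 : γ F ≤ ∑' i, m₀ (U i ∩ Metric.thickening ρ F) := by
        rw [hγ, OuterMeasure.ofFunction_apply]
        exact iInf₂_le (fun i => U i ∩ Metric.thickening ρ F) covF
      calc γ E + γ F ≤ (∑' i, m₀ (U i ∩ Metric.thickening ρ E)) +
            ∑' i, m₀ (U i ∩ Metric.thickening ρ F) := add_le_add hE1 hF1
      _ = ∑' i, (m₀ (U i ∩ Metric.thickening ρ E) + m₀ (U i ∩ Metric.thickening ρ F)) :=
          ENNReal.tsum_add.symm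
      _ ≤ ∑' i, m₀ (U i) := by
          refine ENNReal.tsum_le_tsum fun i => ?_
          have hoE : IsOpen (U i ∩ Metric.thickening ρ E) :=
            (hop i).inter Metric.isOpen_thickening
          have hoF : IsOpen (U i ∩ Metric.thickening ρ F) :=
            (hop i).inter Metric.isOpen_thickening
          simp only [hm₀, if_pos hoE, if_pos hoF, if_pos (hop i)]
          exact hβ_super (U i) _ _ (hop i) Metric.isOpen_thickening
            Metric.isOpen_thickening hTdisj
    · push_neg at hop
      obtain ⟨i, hi⟩ := hop
      have : m₀ (U i) = ⊤ := by simp [hm₀, hi]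
      refine le_trans le_top ?_
      rw [← this]
      exact ENNReal.le_tsum i
  -- the Borel measure
  have hborel : (inferInstance : MeasurableSpace X) ≤ γ.caratheodory := by
    rw [BorelSpace.measurable_eq (α := X)]
    exact hmetric.borel_le_caratheodory
  set μγ : Measure X := γ.toMeasure hborel with hμγ
  -- total mass computation
  have hγ_univ_le : γ Set.univ ≤ 1 := by
    refine (hγ_le _).trans ?_
    simp only [hm₀, if_pos isOpen_univ]
    exact hβ_le_one _
  have key : ∀ m : ℕ, ∀ U : ℕ → Set X, Set.univ ⊆ ⋃ i, U i → (∀ i, IsOpen (U i)) →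
      ENNReal.ofReal (1 - 1/(m+1)) ≤ ∑' i, m₀ (U i) := by
    intro m U hcov hop
    obtain ⟨s, hs⟩ := (hKmc m).elim_finite_subcover U hop
      ((Set.subset_univ _).trans hcov)
    -- Lebesgue number lemma
    have hcov' : Km m ⊆ ⋃ i : {i // i ∈ s}, U i.1 := by
      intro x hx
      obtain ⟨i, his, hxi⟩ := Set.mem_iUnion₂.1 (hs hx)
      exact Set.mem_iUnion.2 ⟨⟨i, his⟩, hxi⟩
    obtain ⟨V, hV, hVleb⟩ := lebesgue_number_lemma (hKmc m) (fun i : {i // i ∈ s} => hop i.1)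
      hcov'
    obtain ⟨δ, hδpos, hδV⟩ := Metric.mem_uniformity_dist.1 hV
    have hleb : ∀ x : X, x ∈ Km m → ∃ i : ℕ, i ∈ s ∧ Metric.ball x δ ⊆ U i := by
      intro x hx
      obtain ⟨i, hi⟩ := hVleb x hx
      exact ⟨i.1, i.2, fun y hy => hi (hδV (by simpa [dist_comm] using hy))⟩
    choose! ix hixs hixU using hleb
    have hdens : ∀ x : X, x ∈ Km m → ∃ j : ℕ, dist x (d j) < δ/8 := by
      intro x hx
      obtain ⟨b, hb, hbd⟩ := Metric.mem_closure_iff.1 (hdense m hx) (δ/8) (by linarith)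
      obtain ⟨j, rfl⟩ := hb
      exact ⟨j, hbd⟩
    choose! jx hjx using hdens
    obtain ⟨q, hq1, hq2⟩ := exists_rat_btwn (show δ/8 < δ/4 by linarith)
    -- cover compact by the rational balls
    have hqpos : (0:ℝ) < q := lt_trans (by linarith) hq1
    have hcovball : Km m ⊆ ⋃ x : {x // x ∈ Km m}, Metric.ball (d (jx x.1)) (q:ℝ) := by
      intro x hx
      exact Set.mem_iUnion.2 ⟨⟨x, hx⟩, by
        simp only [Metric.mem_ball]
        rw [dist_comm] at *
        exact lt_trans (by rw [dist_comm]; exact hjx x hx) hq1⟩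
    obtain ⟨t, ht⟩ := (hKmc m).elim_finite_subcover
      (fun x : {x // x ∈ Km m} => Metric.ball (d (jx x.1)) (q:ℝ))
      (fun _ => Metric.isOpen_ball) hcovball
    -- the finsets
    set J : ℕ → Finset (ℕ × ℚ) :=
      fun i => (t.filter (fun x => ix x.1 = i)).image (fun x => (jx x.1, q)) with hJ
    have hballU : ∀ x : X, x ∈ Km m → Metric.closedBall (d (jx x)) (q:ℝ) ⊆ U (ix x) := by
      intro x hx y hy
      refine hixU x hx ?_
      simp only [Metric.mem_closedBall] at hy
      simp only [Metric.mem_ball]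
      have h1 := hjx x hx
      calc dist y x ≤ dist y (d (jx x)) + dist (d (jx x)) x := dist_triangle _ _ _
      _ < q + δ/8 := by
          rw [dist_comm (d (jx x)) x]
          exact add_lt_add_of_le_of_lt hy h1
      _ < δ := by linarith
    have hJU : ∀ i : ℕ, A (J i) ⊆ U i := by
      intro i y hy
      simp only [hA, Set.mem_iUnion] at hy
      obtain ⟨p, hp, hyp⟩ := hy
      simp only [hJ, Finset.mem_image, Finset.mem_filter] at hp
      obtain ⟨x, ⟨hxt, hxi⟩, rfl⟩ := hp
      have := hballU x.1 x.2 hyp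
      rwa [hxi] at this
    -- W is an open set containing the compact
    set W : Set X := ⋃ x ∈ t, Metric.ball (d (jx x.1)) (q:ℝ) with hW
    have hWopen : IsOpen W := isOpen_biUnion fun _ _ => Metric.isOpen_ball
    have hWKm : Km m ⊆ W := ht
    have hWA : W ⊆ A (s.sup J) := by
      intro y hy
      simp only [hW, Set.mem_iUnion] at hy
      obtain ⟨x, hxt, hyx⟩ := hy
      have hpmem : (jx x.1, q) ∈ s.sup J := by
        have hsub : J (ix x.1) ⊆ s.sup J := Finset.le_sup (f := J) (hixs x.1 x.2)
        refine hsub ?_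
        simp only [hJ, Finset.mem_image]
        exact ⟨x, Finset.mem_filter.2 ⟨hxt, rfl⟩, rfl⟩
      simp only [hA, Set.mem_iUnion]
      exact ⟨(jx x.1, q), hpmem, Metric.ball_subset_closedBall hyx⟩
    -- sum bound
    have hsum_gen : ∀ s' : Finset ℕ, α (s'.sup J) ≤ ∑ i ∈ s', α (J i) := by
      classical
      intro s'
      induction s' using Finset.induction_on with
      | empty => simp [hα_empty]
      | @insert a s' ha ih =>
        rw [Finset.sup_insert, Finset.sum_insert ha]
        exact le_trans (hα_subadd _ _) (add_le_add le_rfl ih)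
    have hsum : α (s.sup J) ≤ ∑ i ∈ s, α (J i) := hsum_gen s
    have hWbound : ENNReal.ofReal (1 - 1/(m+1)) ≤ α (s.sup J) := by
      have h1 := hKmm m W hWopen hWKm
      have h2 := liminf_comp' (u := fun n => (ν n : Measure X) W) hψ
      have h3 : Filter.liminf (fun n => (ν (ψ n) : Measure X) W) Filter.atTop
          ≤ α (s.sup J) := by
        rw [← (hα (s.sup J)).liminf_eq]
        exact Filter.liminf_le_liminf
          (Filter.Eventually.of_forall fun n => measure_mono hWA)
      exact le_trans h1 (le_trans h2 h3)
    calc ENNReal.ofReal (1 - 1/(m+1)) ≤ α (s.sup J) := hWbound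
    _ ≤ ∑ i ∈ s, α (J i) := hsum
    _ ≤ ∑ i ∈ s, m₀ (U i) := by
        refine Finset.sum_le_sum fun i _ => ?_
        simp only [hm₀, if_pos (hop i)]
        exact hβ_witness (J i) (U i) (hJU i)
    _ ≤ ∑' i, m₀ (U i) := ENNReal.sum_le_tsum s
  have hγ_univ_ge : (1 : ℝ≥0∞) ≤ γ Set.univ := by
    rw [hγ, OuterMeasure.ofFunction_apply]
    refine le_iInf fun U => le_iInf fun hcov => ?_
    by_cases hop : ∀ i, IsOpen (U i)
    · rw [show (1 : ℝ≥0∞) = ENNReal.ofReal 1 by simp]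
      refine ofReal_sub' fun θ hθ => ?_
      obtain ⟨m, hm⟩ := exists_nat_gt (1/θ)
      have hmθ : 1/((m:ℝ)+1) < θ := by
        rw [div_lt_iff₀ (by positivity)]
        rw [div_lt_iff₀ hθ] at hm
        nlinarith
      refine le_trans ?_ (key m U hcov hop)
      apply ENNReal.ofReal_le_ofReal
      linarith
    · push_neg at hop
      obtain ⟨i, hi⟩ := hop
      have : m₀ (U i) = ⊤ := by simp [hm₀, hi]
      refine le_trans le_top ?_
      rw [← this]
      exact ENNReal.le_tsum i
  -- the limit probability measure
  have hμγ_univ : μγ Set.univ = 1 := by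
    rw [hμγ, MeasureTheory.toMeasure_apply γ hborel MeasurableSet.univ]
    exact le_antisymm hγ_univ_le hγ_univ_ge
  haveI hprob : IsProbabilityMeasure μγ := ⟨hμγ_univ⟩
  set ρPM : ProbabilityMeasure X := ⟨μγ, hprob⟩ with hρPM
  have hopen_bound : ∀ G : Set X, IsOpen G →
      μγ G ≤ Filter.liminf (fun i => (ν (ψ i) : Measure X) G) Filter.atTop := by
    intro G hG
    rw [hμγ, MeasureTheory.toMeasure_apply γ hborel hG.measurableSet]
    refine (hγ_le G).trans ?_
    simp only [hm₀, if_pos hG]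
    exact hβ_le_liminf G
  refine ⟨ψ, hψ, ρPM, ?_⟩
  apply MeasureTheory.tendsto_of_forall_isOpen_le_liminf
  intro G hG
  have aux : (↑(Filter.liminf (fun i => (ν (ψ i)) G) Filter.atTop) : ℝ≥0∞) =
      Filter.liminf (fun i => (((ν (ψ i)) G : ℝ≥0) : ℝ≥0∞)) Filter.atTop := by
    refine Monotone.map_liminf_of_continuousAt (F := Filter.atTop) ENNReal.coe_mono
      (fun i => (ν (ψ i)) G) ENNReal.continuous_coe.continuousAt ?_ ?_
    · exact Filter.IsBoundedUnder.isCoboundedUnder_ge ⟨1, by simp⟩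
    · exact ⟨0, by simp⟩
  rw [← ENNReal.coe_le_coe, aux]
  simp only [MeasureTheory.ProbabilityMeasure.ennreal_coeFn_eq_coeFn_toMeasure]
  have : (ρPM : Measure X) G = μγ G := rfl
  rw [this]
  exact hopen_bound G hG


end SeqTightAux5


open SeqTightAux SeqTightAux2 SeqTightAux3 SeqTightAux4 SeqTightAux5 in
/-- For a sequence `(μₙ)` of Borel probability measures on a metric space, with
`ℒ = ⋂ₙ closure {μ_k : k ≥ n}` the set of subsequential weak limits, the following are
equivalent: (i) `(μₙ)` is asymptotically tight; (ii) `(μₙ)` is sequentially tight;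
(iii) `(μₙ)` is precompact and `ℒ` is tight. -/
theorem asymptotically_tight_iff_sequentially_tight_iff_precompact_tight_limits
    {X : Type*} [MetricSpace X] [MeasurableSpace X] [BorelSpace X]
    (μ : ℕ → ProbabilityMeasure X)
    (L : Set (ProbabilityMeasure X))
    (hL : L = ⋂ n : ℕ, closure {ν : ProbabilityMeasure X | ∃ k : ℕ, n ≤ k ∧ ν = μ k}) :
    -- (i) asymptotic tightness
    ((∀ ε : ℝ, 0 < ε → ∃ K : Set X, IsCompact K ∧
        ∀ G : Set X, IsOpen G → K ⊆ G →
          ENNReal.ofReal (1 - ε) ≤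
            Filter.liminf (fun n => (μ n : Measure X) G) Filter.atTop)
      ↔
    -- (ii) sequential tightness
      (∀ ε : ℝ, 0 < ε → ∃ K : ℝ → Set X,
        (∀ δ : ℝ, 0 < δ → IsCompact (K δ)) ∧
        (∀ δ : ℝ, 0 < δ →
          ENNReal.ofReal (1 - ε) ≤
            Filter.liminf (fun n => (μ n : Measure X) (Metric.thickening δ (K δ)))
              Filter.atTop) ∧
        IsComplete (closure (⋃ δ ∈ Set.Ioi (0 : ℝ), K δ))))
    ∧
    -- (ii) ↔ (iii) precompactness together with tightness of ℒ
    ((∀ ε : ℝ, 0 < ε → ∃ K : ℝ → Set X,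
        (∀ δ : ℝ, 0 < δ → IsCompact (K δ)) ∧
        (∀ δ : ℝ, 0 < δ →
          ENNReal.ofReal (1 - ε) ≤
            Filter.liminf (fun n => (μ n : Measure X) (Metric.thickening δ (K δ)))
              Filter.atTop) ∧
        IsComplete (closure (⋃ δ ∈ Set.Ioi (0 : ℝ), K δ)))
      ↔
      ((∀ φ : ℕ → ℕ, StrictMono φ →
          ∃ ψ : ℕ → ℕ, StrictMono ψ ∧ ∃ ν : ProbabilityMeasure X,
            Filter.Tendsto (fun j => μ (φ (ψ j))) Filter.atTop (𝓝 ν)) ∧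
        (∀ ε : ℝ, 0 < ε → ∃ K : Set X, IsCompact K ∧
          ∀ ν ∈ L, ENNReal.ofReal (1 - ε) ≤ (ν : Measure X) K))) := by
  constructor
  · exact ⟨asymp_imp_seq μ, seq_imp_asymp μ⟩
  · constructor
    · intro hseq
      have hasymp := seq_imp_asymp μ hseq
      constructor
      · intro φ hφ
        refine exists_tendsto_of_asymp (fun n => μ (φ n)) ?_
        intro ε hε
        obtain ⟨K, hK, hmass⟩ := hasymp ε hε
        exact ⟨K, hK, fun G hG hKG =>
          (hmass G hG hKG).trans (liminf_le_liminf_comp' hφ)⟩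
      · exact asymp_imp_Ltight μ L hL hasymp
    · rintro ⟨hpre, htight⟩
      exact asymp_imp_seq μ (precompact_Ltight_imp_asymp μ L hL hpre htight)
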